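/- Let γ, B ∈ ℝ and let P : ℝ × (0,π) → ℝ be differentiable. Define on S² ⊂ ℝ³ the background vorticity field ω(d) := −(1/2) d × (0,0,γ) and the background strain field E(d) := ℰd − d⟨d, ℰd⟩, where ℰ is the 3×3 matrix with rows (0, γ/2, 0), (γ/2, 0, 0), (0, 0, 0), and set W(α,β) := ω(d(α,β)) + B·E(d(α,β)). Then W is tangent to S² and, for all (α,β) ∈ ℝ × (0,π), the spherical divergence in coordinates satisfies (1/sin β) [ ∂_α( (W·α̂) P ) + ∂_β( sin β (W·β̂) P ) ] = −(3γB/2) sin²β sin(2α) P + (γ/2)(1 + B cos(2α)) ∂_α P + (γB/4) sin(2α) sin(2β) ∂_β P, where α̂ = (−sin α, cos α, 0) and β̂ = (cos α cos β, sin α cos β, −sin β). -/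

import Mathlib

open Matrix

/-- The point on the unit sphere with azimuthal angle `α` and polar angle `β`. -/
noncomputable def sphPoint (α β : ℝ) : Fin 3 → ℝ :=
  ![Real.cos α * Real.sin β, Real.sin α * Real.sin β, Real.cos β]

/-- The unit tangent vector `α̂ = (−sin α, cos α, 0)`. -/
noncomputable def alphaHat (α : ℝ) : Fin 3 → ℝ :=
  ![-Real.sin α, Real.cos α, 0]

/-- The unit tangent vector `β̂ = (cos α cos β, sin α cos β, −sin β)`. -/
noncomputable def betaHat (α β : ℝ) : Fin 3 → ℝ :=
  ![Real.cos α * Real.cos β, Real.sin α * Real.cos β, -Real.sin β]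

/-- The background vorticity field `ω(d) = −(1/2) d × (0,0,γ)`. -/
noncomputable def omegaBG (γ : ℝ) (d : Fin 3 → ℝ) : Fin 3 → ℝ :=
  -(1 / 2 : ℝ) • (d ⨯₃ ![0, 0, γ])

/-- The symmetric gradient `ℰ` of the planar shear background flow. -/
noncomputable def strainBG (γ : ℝ) : Matrix (Fin 3) (Fin 3) ℝ :=
  !![0, γ / 2, 0; γ / 2, 0, 0; 0, 0, 0]

/-- The background strain field `E(d) = ℰd − d⟨d, ℰd⟩`. -/
noncomputable def EBG (γ : ℝ) (d : Fin 3 → ℝ) : Fin 3 → ℝ :=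
  (strainBG γ).mulVec d - (d ⬝ᵥ (strainBG γ).mulVec d) • d

/-- The Jeffery orientation flux `W = ω + B·E` at the point `d(α,β)`. -/
noncomputable def Wfield (γ B α β : ℝ) : Fin 3 → ℝ :=
  omegaBG γ (sphPoint α β) + B • EBG γ (sphPoint α β)

lemma Wfield_alphaHat (γ B α β : ℝ) :
    Wfield γ B α β ⬝ᵥ alphaHat α = γ/2 * Real.sin β * (1 + B * Real.cos (2*α)) := by
  simp [Wfield, omegaBG, EBG, sphPoint, alphaHat, strainBG, crossProduct, mulVec, dotProduct,
    Fin.sum_univ_three, Real.cos_two_mul, Matrix.vecHead, Matrix.vecTail, Function.comp]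
  linear_combination (γ/2 * Real.sin β * (1-B)) * (Real.sin_sq_add_cos_sq α)

lemma Wfield_betaHat (γ B α β : ℝ) :
    Wfield γ B α β ⬝ᵥ betaHat α β = γ*B/2 * Real.sin (2*α) * Real.sin β * Real.cos β := by
  simp [Wfield, omegaBG, EBG, sphPoint, betaHat, strainBG, crossProduct, mulVec, dotProduct,
    Fin.sum_univ_three, Real.sin_two_mul, Matrix.vecHead, Matrix.vecTail, Function.comp]
  linear_combination (-(B*γ*Real.cos α*Real.sin α*Real.sin β^3*Real.cos β)) * (Real.sin_sq_add_cos_sq α)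

/-- The field `W = ω + B·E` is tangent to the sphere, and
its spherical divergence against a differentiable `P` equals
`−(3γB/2) sin²β sin(2α) P + (γ/2)(1 + B cos(2α)) ∂_α P
  + (γB/4) sin(2α) sin(2β) ∂_β P`. -/
theorem background_flow_spherical_divergence (γ B : ℝ) (P : ℝ → ℝ → ℝ)
    (hP : DifferentiableOn ℝ (fun q : ℝ × ℝ => P q.1 q.2)
      (Set.univ ×ˢ Set.Ioo 0 Real.pi)) :
    (∀ α β : ℝ, Wfield γ B α β ⬝ᵥ sphPoint α β = 0)
    ∧ ∀ α : ℝ, ∀ β ∈ Set.Ioo (0 : ℝ) Real.pi,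
      (1 / Real.sin β) *
          (deriv (fun a => (Wfield γ B a β ⬝ᵥ alphaHat a) * P a β) α
            + deriv (fun b =>
                Real.sin b * (Wfield γ B α b ⬝ᵥ betaHat α b) * P α b) β)
        = -(3 * γ * B / 2) * Real.sin β ^ 2 * Real.sin (2 * α) * P α β
          + γ / 2 * (1 + B * Real.cos (2 * α)) * deriv (fun a => P a β) α
          + γ * B / 4 * Real.sin (2 * α) * Real.sin (2 * β)
              * deriv (fun b => P α b) β := by
  constructor
  · intro α β
    simp [Wfield, omegaBG, EBG, sphPoint, strainBG, crossProduct, mulVec, dotProduct,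
      Fin.sum_univ_three, Matrix.vecHead, Matrix.vecTail, Function.comp]
    linear_combination (-(B*γ*Real.cos α*Real.sin α*Real.sin β^4)) * (Real.sin_sq_add_cos_sq α)
      + (-(B*γ*Real.cos α*Real.sin α*Real.sin β^2)) * (Real.sin_sq_add_cos_sq β)
  · intro α β hβ
    have hs : 0 < Real.sin β := Real.sin_pos_of_pos_of_lt_pi hβ.1 hβ.2
    have hs' : Real.sin β ≠ 0 := ne_of_gt hs
    have hopen : IsOpen ((Set.univ : Set ℝ) ×ˢ Set.Ioo (0:ℝ) Real.pi) :=
      isOpen_univ.prod isOpen_Ioo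
    have hPd : DifferentiableAt ℝ (fun q : ℝ × ℝ => P q.1 q.2) (α, β) :=
      hP.differentiableAt (hopen.mem_nhds ⟨trivial, hβ⟩)
    have hPa : HasDerivAt (fun a => P a β) (deriv (fun a => P a β) α) α := by
      have : DifferentiableAt ℝ (fun a : ℝ => P a β) α := by
        have h := hPd.comp α ((differentiableAt_id : DifferentiableAt ℝ (fun x : ℝ => x) α).prodMk (differentiableAt_const β)); exact h
      exact this.hasDerivAt
    have hPb : HasDerivAt (fun b => P α b) (deriv (fun b => P α b) β) β := by
      have : DifferentiableAt ℝ (fun b : ℝ => P α b) β :=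
        hPd.comp β ((differentiableAt_const α).prodMk differentiableAt_id)
      exact this.hasDerivAt
    have e1 : (fun a => (Wfield γ B a β ⬝ᵥ alphaHat a) * P a β)
        = fun a => (γ/2 * Real.sin β * (1 + B * Real.cos (2*a))) * P a β :=
      funext fun a => by rw [Wfield_alphaHat]
    have e2 : (fun b => Real.sin b * (Wfield γ B α b ⬝ᵥ betaHat α b) * P α b)
        = fun b => (Real.sin b * (γ*B/2 * Real.sin (2*α) * Real.sin b * Real.cos b)) * P α b :=
      funext fun b => by rw [Wfield_betaHat]
    have hf : HasDerivAt (fun a => γ/2 * Real.sin β * (1 + B * Real.cos (2*a)))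
        (γ/2 * Real.sin β * (B * (-Real.sin (2*α) * 2))) α := by
      have h2a : HasDerivAt (fun a : ℝ => 2*a) 2 α := by
        simpa using (hasDerivAt_id α).const_mul 2
      have hcos : HasDerivAt (fun a => Real.cos (2*a)) (-Real.sin (2*α) * 2) α :=
        (Real.hasDerivAt_cos (2*α)).comp α h2a
      have := ((hcos.const_mul B).const_add 1).const_mul (γ/2 * Real.sin β)
      convert this using 1
    have hsinb := Real.hasDerivAt_sin β
    have hcosb := Real.hasDerivAt_cos β
    have hg : HasDerivAt (fun b => Real.sin b * (γ*B/2 * Real.sin (2*α) * Real.sin b * Real.cos b))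
        (Real.cos β * (γ*B/2 * Real.sin (2*α) * Real.sin β * Real.cos β)
          + Real.sin β * ((γ*B/2 * Real.sin (2*α)) * Real.cos β * Real.cos β
              + (γ*B/2 * Real.sin (2*α)) * Real.sin β * (-Real.sin β))) β := by
      have hin : HasDerivAt (fun b => γ*B/2 * Real.sin (2*α) * Real.sin b * Real.cos b)
          ((γ*B/2 * Real.sin (2*α)) * Real.cos β * Real.cos β
            + (γ*B/2 * Real.sin (2*α)) * Real.sin β * (-Real.sin β)) β := by
        have h1 : HasDerivAt (fun b => γ*B/2 * Real.sin (2*α) * Real.sin b)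
            ((γ*B/2 * Real.sin (2*α)) * Real.cos β) β := hsinb.const_mul _
        simpa [mul_comm, mul_assoc, mul_left_comm] using h1.fun_mul hcosb
      simpa using hsinb.fun_mul hin
    rw [e1, e2, (hf.fun_mul hPa).deriv, (hg.fun_mul hPb).deriv, Real.sin_two_mul β]
    field_simp
    ring_nf
    linear_combination (8*γ*B*Real.sin (α*2)*P α β) * Real.sin_sq_add_cos_sq β
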